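/- Let X be a nonempty finite type and D_0, D_1 distributions on X. Set D_X := (1/2)(D_0 + D_1) and let g be the associated posterior function. If h : X → [0,1] is γ-calibrated for g under D_X, then for every function w : ℝ → [0,1]: |E_{D_1}[w∘h] − 2·E_{D_X}[h·(w∘h)]| ≤ 2γ and |E_{D_0}[w∘h] − 2·E_{D_X}[(1−h)·(w∘h)]| ≤ 2γ. -/

import Mathlib

/-- Expectation of `f` under the (finitely supported) distribution `D`. -/
noncomputable def expect {X : Type*} [Fintype X] (D f : X → ℝ) : ℝ := ∑ x, D x * f x

/-- `D` is a probability distribution on the finite type `X`. -/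
def IsDist {X : Type*} [Fintype X] (D : X → ℝ) : Prop := (∀ x, 0 ≤ D x) ∧ ∑ x, D x = 1

theorem stmt_11 {X : Type*} [Fintype X] [Nonempty X]
    (D0 D1 : X → ℝ) (hD0 : IsDist D0) (hD1 : IsDist D1)
    (DX : X → ℝ) (hDX : DX = fun x => (D0 x + D1 x) / 2)
    (g : X → ℝ)
    (hg : g = fun x => if 0 < D0 x + D1 x then D1 x / (D0 x + D1 x) else 0)
    (γ : ℝ)
    (h : X → ℝ) (hh : ∀ x, h x ∈ Set.Icc (0:ℝ) 1)
    (hcal : ∀ w : ℝ → ℝ, (∀ t, w t ∈ Set.Icc (0:ℝ) 1) →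
      |expect DX (fun x => w (h x) * (g x - h x))| ≤ γ) :
    ∀ w : ℝ → ℝ, (∀ t, w t ∈ Set.Icc (0:ℝ) 1) →
      |expect D1 (fun x => w (h x)) - 2 * expect DX (fun x => h x * w (h x))| ≤ 2 * γ ∧
      |expect D0 (fun x => w (h x)) - 2 * expect DX (fun x => (1 - h x) * w (h x))| ≤ 2 * γ := by
  intro w hw
  have hkey1 : ∀ x, D1 x = 2 * DX x * g x := by
    intro x
    subst hDX hg
    by_cases hs : 0 < D0 x + D1 x
    · simp only [if_pos hs]
      field_simp
    · simp only [if_neg hs]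
      have h1 : D1 x = 0 := le_antisymm (by nlinarith [hD0.1 x, hD1.1 x]) (hD1.1 x)
      simp [h1]
  have hkey0 : ∀ x, D0 x = 2 * DX x * (1 - g x) := by
    intro x
    subst hDX hg
    by_cases hs : 0 < D0 x + D1 x
    · simp only [if_pos hs]
      field_simp
      ring
    · simp only [if_neg hs]
      have h0 : D0 x = 0 := le_antisymm (by nlinarith [hD0.1 x, hD1.1 x]) (hD0.1 x)
      have h1 : D1 x = 0 := le_antisymm (by nlinarith [hD0.1 x, hD1.1 x]) (hD1.1 x)
      simp [h0, h1]
  have hc := hcal w hw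
  constructor
  · have e1 : expect D1 (fun x => w (h x)) - 2 * expect DX (fun x => h x * w (h x))
        = 2 * expect DX (fun x => w (h x) * (g x - h x)) := by
      unfold expect
      rw [Finset.mul_sum, Finset.mul_sum, ← Finset.sum_sub_distrib]
      refine Finset.sum_congr rfl fun x _ => ?_
      rw [hkey1 x]; ring
    rw [e1, abs_mul, abs_two]
    linarith
  · have e0 : expect D0 (fun x => w (h x)) - 2 * expect DX (fun x => (1 - h x) * w (h x))
        = -(2 * expect DX (fun x => w (h x) * (g x - h x))) := by
      unfold expect
      rw [Finset.mul_sum, Finset.mul_sum, ← Finset.sum_sub_distrib, ← Finset.sum_neg_distrib]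
      refine Finset.sum_congr rfl fun x _ => ?_
      rw [hkey0 x]; ring
    rw [e0, abs_neg, abs_mul, abs_two]
    linarith
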